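/- Assume α_r·πʷ > π⁺ (hence also α_r·πʷ > π⁻). Define Γ_IM^s := w̄_r/α_r − w_h^IM/η_h and Γ_EX^s := w̄_r/α_r − w_h^EX/η_h, and set w_h^s(g) := w_h^IM if g < Γ_IM^s; clamp(η_h·(w̄_r/α_r − g), w̲_h, w̄_h) if Γ_IM^s ≤ g ≤ Γ_EX^s; w_h^EX if g > Γ_EX^s. Then for every g, the point (w_h^s(g), w̄_r) maximizes the profit over the feasible set: for all (w_h, w_r) ∈ F, Π(w_h, w_r, g) ≤ Π(w_h^s(g), w̄_r, g). -/
import Mathlib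


open Set

noncomputable section

/-- Net electricity exchange. -/
def netz (αr ηh wh wr g : ℝ) : ℝ := wr / αr - wh / ηh - g

/-- Electricity payment under net metering. -/
def epay (πp πm π0 αr ηh wh wr g : ℝ) : ℝ :=
  πp * max (netz αr ηh wh wr g) 0 + πm * min (netz αr ηh wh wr g) 0 + π0

/-- WDP profit. -/
def profit (πw πp πm π0 αr αh ηh : ℝ) (C : ℝ → ℝ) (wh wr g : ℝ) : ℝ :=
  πw * (wh + wr) - epay πp πm π0 αr ηh wh wr g - C (wh / αh)

/-- clamp(x, a, b) = max(a, min(x, b)). -/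
def clampR (x a b : ℝ) : ℝ := max a (min x b)

/-- Value function: sup of profit over the feasible rectangle. -/
def Pstar (πw πp πm π0 αr αh ηh : ℝ) (C : ℝ → ℝ) (wlh wuh wlr wur g : ℝ) : ℝ :=
  sSup ((fun p : ℝ × ℝ => profit πw πp πm π0 αr αh ηh C p.1 p.2 g) ''
    (Icc wlh wuh ×ˢ Icc wlr wur))

/-- Linear upper bound on profit for any δ between πm and πp. -/
lemma profit_le_lin (πw πp πm π0 αr αh ηh : ℝ) (C : ℝ → ℝ) (wh wr g δ : ℝ)
    (h1 : πm ≤ δ) (h2 : δ ≤ πp) :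
    profit πw πp πm π0 αr αh ηh C wh wr g ≤
      (πw + δ / ηh) * wh + (πw - δ / αr) * wr + δ * g - π0 - C (wh / αh) := by
  have hz : netz αr ηh wh wr g = wr / αr - wh / ηh - g := rfl
  set z := netz αr ηh wh wr g with hzdef
  have hmax : 0 ≤ max z 0 := le_max_right _ _
  have hmin : min z 0 ≤ 0 := min_le_right _ _
  have hsum : max z 0 + min z 0 = z + 0 := max_add_min z 0
  have h3 : δ * z ≤ πp * max z 0 + πm * min z 0 := by
    have e1 : δ * max z 0 + δ * min z 0 = δ * z := by rw [← mul_add, hsum]; ring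
    have e2 := mul_le_mul_of_nonneg_right h2 hmax
    have e3 := mul_le_mul_of_nonpos_right h1 hmin
    linarith
  have hexp : (πw + δ / ηh) * wh + (πw - δ / αr) * wr + δ * g
      = πw * (wh + wr) - δ * z := by rw [hz]; ring
  unfold profit epay
  rw [← hzdef]
  linarith [h3, hexp]

lemma profit_eq_of_nonneg (πw πp πm π0 αr αh ηh : ℝ) (C : ℝ → ℝ) (wh wr g : ℝ)
    (hz : 0 ≤ netz αr ηh wh wr g) :
    profit πw πp πm π0 αr αh ηh C wh wr g =
      (πw + πp / ηh) * wh + (πw - πp / αr) * wr + πp * g - π0 - C (wh / αh) := by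
  have hz' : netz αr ηh wh wr g = wr / αr - wh / ηh - g := rfl
  unfold profit epay
  rw [max_eq_left hz, min_eq_right hz, hz']
  ring

lemma profit_eq_of_nonpos (πw πp πm π0 αr αh ηh : ℝ) (C : ℝ → ℝ) (wh wr g : ℝ)
    (hz : netz αr ηh wh wr g ≤ 0) :
    profit πw πp πm π0 αr αh ηh C wh wr g =
      (πw + πm / ηh) * wh + (πw - πm / αr) * wr + πm * g - π0 - C (wh / αh) := by
  have hz' : netz αr ηh wh wr g = wr / αr - wh / ηh - g := rfl
  unfold profit epay
  rw [max_eq_right hz, min_eq_left hz, hz']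
  ring

lemma concaveG (αh : ℝ) (hαh : 0 < αh) (C : ℝ → ℝ) (hC : ConvexOn ℝ univ C) (c : ℝ) :
    ConcaveOn ℝ univ (fun w : ℝ => c * w - C (w / αh)) := by
  refine ⟨convex_univ, ?_⟩
  intro x _ y _ a b ha hb hab
  have h := hC.2 (mem_univ (x / αh)) (mem_univ (y / αh)) ha hb hab
  simp only [smul_eq_mul] at h ⊢
  have hx : (a * x + b * y) / αh = a * (x / αh) + b * (y / αh) := by
    field_simp
  rw [hx]
  nlinarith [h]

lemma concave_mid {f : ℝ → ℝ} (hf : ConcaveOn ℝ univ f) {a b c : ℝ}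
    (hab : a ≤ b) (hbc : b ≤ c) (h : f a ≤ f c) : f a ≤ f b := by
  have hb : b ∈ segment ℝ a c := by
    rw [segment_eq_Icc (hab.trans hbc)]; exact ⟨hab, hbc⟩
  have := hf.ge_on_segment (mem_univ a) (mem_univ c) hb
  rw [min_eq_left h] at this
  exact this

lemma concave_mid' {f : ℝ → ℝ} (hf : ConcaveOn ℝ univ f) {a b c : ℝ}
    (hab : a ≤ b) (hbc : b ≤ c) (h : f c ≤ f a) : f c ≤ f b := by
  have hb : b ∈ segment ℝ a c := by
    rw [segment_eq_Icc (hab.trans hbc)]; exact ⟨hab, hbc⟩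
  have := hf.ge_on_segment (mem_univ a) (mem_univ c) hb
  rw [min_eq_right h] at this
  exact this

/-- special tariff case α_r·πʷ > π⁺: RODP at maximum, TDP two-threshold. -/
theorem special_tariff_high_water_price
    (πp πm π0 πw αh ηh αr wlh wuh wlr wur : ℝ) (C : ℝ → ℝ)
    (hπ : πm ≤ πp) (hπm : 0 ≤ πm) (hπw : 0 ≤ πw)
    (hαh : 0 < αh) (hηh : 0 < ηh) (hαr : 0 < αr)
    (hwlh : 0 ≤ wlh) (hwhb : wlh ≤ wuh) (hwlr : 0 ≤ wlr) (hwrb : wlr ≤ wur)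
    (hC : StrictConvexOn ℝ univ C) (hCd : Differentiable ℝ C) (hCm : Monotone C)
    (Wfun : ℝ → ℝ)
    (hWfun : ∀ δ : ℝ, Wfun δ ∈ Icc wlh wuh ∧
      ∀ w ∈ Icc wlh wuh,
        (πw + δ / ηh) * w - C (w / αh) ≤ (πw + δ / ηh) * Wfun δ - C (Wfun δ / αh))
    (hsp : πp < αr * πw) :
    ∀ g : ℝ,
      ∀ wh ∈ Icc wlh wuh, ∀ wr ∈ Icc wlr wur,
        profit πw πp πm π0 αr αh ηh C wh wr g ≤
          profit πw πp πm π0 αr αh ηh C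
            (if g < wur / αr - Wfun πp / ηh then Wfun πp
             else if g ≤ wur / αr - Wfun πm / ηh then clampR (ηh * (wur / αr - g)) wlh wuh
             else Wfun πm) wur g := by
  intro g wh hwh wr hwr
  obtain ⟨hWpmem, hWpmax⟩ := hWfun πp
  obtain ⟨hWmmem, hWmmax⟩ := hWfun πm
  have coefp : 0 ≤ πw - πp / αr := by
    have h := (div_lt_iff₀ hαr).mpr (by linarith : πp < πw * αr)
    linarith
  have coefm : 0 ≤ πw - πm / αr := by
    have h := (div_lt_iff₀ hαr).mpr (by linarith : πm < πw * αr)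
    linarith
  split_ifs with h1 h2
  · -- case 1: import, use δ = πp
    have hz : 0 ≤ netz αr ηh (Wfun πp) wur g := by
      have : netz αr ηh (Wfun πp) wur g = wur / αr - Wfun πp / ηh - g := rfl
      rw [this]; linarith
    rw [profit_eq_of_nonneg πw πp πm π0 αr αh ηh C _ _ _ hz]
    have hG := hWpmax wh hwh
    have hwr' : (πw - πp / αr) * wr ≤ (πw - πp / αr) * wur :=
      mul_le_mul_of_nonneg_left hwr.2 coefp
    have hub := profit_le_lin πw πp πm π0 αr αh ηh C wh wr g πp hπ le_rfl
    linarith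
  · -- case 2: net-zero, clamp
    push_neg at h1
    have hle1 : Wfun πm ≤ ηh * (wur / αr - g) := by
      have h' : Wfun πm / ηh ≤ wur / αr - g := by linarith
      have := (div_le_iff₀ hηh).mp h'
      linarith
    have hle2 : ηh * (wur / αr - g) ≤ Wfun πp := by
      have h' : wur / αr - g ≤ Wfun πp / ηh := by linarith
      have := (le_div_iff₀ hηh).mp h'
      linarith
    have hcl : clampR (ηh * (wur / αr - g)) wlh wuh = ηh * (wur / αr - g) := by
      unfold clampR
      rw [min_eq_left (hle2.trans hWpmem.2), max_eq_right (hWmmem.1.trans hle1)]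
    rw [hcl]
    set ws := ηh * (wur / αr - g) with hws
    have hwsmem : ws ∈ Icc wlh wuh := ⟨hWmmem.1.trans hle1, hle2.trans hWpmem.2⟩
    have hzs : netz αr ηh ws wur g = 0 := by
      have : netz αr ηh ws wur g = wur / αr - ws / ηh - g := rfl
      rw [this, hws]
      field_simp
      ring
    have hconc := concaveG αh hαh C hC.convexOn
    rcases le_total wh ws with hcase | hcase
    · -- wh ≤ ws ≤ Wfun πp : use δ = πp
      rw [profit_eq_of_nonneg πw πp πm π0 αr αh ηh C _ _ _ (le_of_eq hzs.symm)]
      have hGp : (πw + πp / ηh) * wh - C (wh / αh) ≤ (πw + πp / ηh) * ws - C (ws / αh) :=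
        concave_mid (hconc (πw + πp / ηh)) hcase hle2 (hWpmax wh hwh)
      have hwr' : (πw - πp / αr) * wr ≤ (πw - πp / αr) * wur :=
        mul_le_mul_of_nonneg_left hwr.2 coefp
      have hub := profit_le_lin πw πp πm π0 αr αh ηh C wh wr g πp hπ le_rfl
      linarith
    · -- Wfun πm ≤ ws ≤ wh : use δ = πm
      rw [profit_eq_of_nonpos πw πp πm π0 αr αh ηh C _ _ _ (le_of_eq hzs)]
      have hGm : (πw + πm / ηh) * wh - C (wh / αh) ≤ (πw + πm / ηh) * ws - C (ws / αh) :=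
        concave_mid' (hconc (πw + πm / ηh)) hle1 hcase (hWmmax wh hwh)
      have hwr' : (πw - πm / αr) * wr ≤ (πw - πm / αr) * wur :=
        mul_le_mul_of_nonneg_left hwr.2 coefm
      have hub := profit_le_lin πw πp πm π0 αr αh ηh C wh wr g πm le_rfl hπ
      linarith
  · -- case 3: export, use δ = πm
    push_neg at h1 h2
    have hz : netz αr ηh (Wfun πm) wur g ≤ 0 := by
      have : netz αr ηh (Wfun πm) wur g = wur / αr - Wfun πm / ηh - g := rfl
      rw [this]; linarith
    rw [profit_eq_of_nonpos πw πp πm π0 αr αh ηh C _ _ _ hz]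
    have hG := hWmmax wh hwh
    have hwr' : (πw - πm / αr) * wr ≤ (πw - πm / αr) * wur :=
      mul_le_mul_of_nonneg_left hwr.2 coefm
    have hub := profit_le_lin πw πp πm π0 αr αh ηh C wh wr g πm le_rfl hπ
    linarith
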